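/- For every t >= 2, sum_{s=1}^{t} eta_s^2 * prod_{tau=s+1}^{t} (1 - a*eta_tau) <= (2/a) * eta_t, where the empty product (for s = t) equals 1. -/
import Mathlib


/-- step-size summation bound
`∑_{s=1}^{t} η_s² ∏_{τ=s+1}^{t} (1 - a η_τ) ≤ (2/a) η_t`. -/
theorem stmt8
    (a : ℝ) (ha : 0 < a)
    (η : ℕ → ℝ)
    (hpos : ∀ t, 1 ≤ t → 0 < η t)
    (hmono : ∀ t, 1 ≤ t → η (t + 1) ≤ η t)
    (h1 : η 1 < 2 / a)
    (hratio : ∀ t, 2 ≤ t → η (t - 1) / η t ≤ 1 + (a / 2) * η t) :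
    ∀ t, 2 ≤ t →
      ∑ s ∈ Finset.Icc 1 t,
          η s ^ 2 * ∏ τ ∈ Finset.Icc (s + 1) t, (1 - a * η τ)
        ≤ (2 / a) * η t := by
  -- monotonicity: η t ≤ η 1 for t ≥ 1
  have hle1 : ∀ t, 1 ≤ t → η t ≤ η 1 := by
    intro t ht
    induction t, ht using Nat.le_induction with
    | base => exact le_rfl
    | succ n hn ih => exact le_trans (hmono n hn) ih
  have hlt : ∀ t, 1 ≤ t → η t < 2 / a := fun t ht => lt_of_le_of_lt (hle1 t ht) h1
  have key : ∀ t, 1 ≤ t →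
      0 ≤ (∑ s ∈ Finset.Icc 1 t,
          η s ^ 2 * ∏ τ ∈ Finset.Icc (s + 1) t, (1 - a * η τ)) ∧
      (∑ s ∈ Finset.Icc 1 t,
          η s ^ 2 * ∏ τ ∈ Finset.Icc (s + 1) t, (1 - a * η τ)) ≤ 2 / a * η t := by
    intro t ht
    induction t, ht using Nat.le_induction with
    | base =>
      have h2 : Finset.Icc 2 1 = (∅ : Finset ℕ) := by decide
      simp [Finset.Icc_self, h2]
      constructor
      · positivity
      · nlinarith [hpos 1 (le_refl 1), hlt 1 (le_refl 1), sq_nonneg (η 1)]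
    | succ n hn ih =>
      set S := ∑ s ∈ Finset.Icc 1 n, η s ^ 2 * ∏ τ ∈ Finset.Icc (s + 1) n, (1 - a * η τ) with hS
      have hrec : (∑ s ∈ Finset.Icc 1 (n+1),
          η s ^ 2 * ∏ τ ∈ Finset.Icc (s + 1) (n+1), (1 - a * η τ))
          = (1 - a * η (n+1)) * S + η (n+1) ^ 2 := by
        rw [Finset.sum_Icc_succ_top (by omega : 1 ≤ n + 1)]
        have hempty : Finset.Icc (n + 1 + 1) (n + 1) = (∅ : Finset ℕ) :=
          Finset.Icc_eq_empty (by omega)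
        rw [hempty, Finset.prod_empty, mul_one]
        congr 1
        rw [hS, Finset.mul_sum]
        apply Finset.sum_congr rfl
        intro s hs
        have hsn : s + 1 ≤ n + 1 := by
          have := (Finset.mem_Icc.mp hs).2; omega
        rw [Finset.prod_Icc_succ_top hsn]
        ring
      rw [hrec]
      have hη : 0 < η (n+1) := hpos (n+1) (by omega)
      have hη2 : η (n+1) < 2 / a := hlt (n+1) (by omega)
      have hηn : 0 < η n := hpos n hn
      have hηn2 : η n < 2 / a := hlt n hn
      have hr := hratio (n+1) (by omega)
      simp only [Nat.add_sub_cancel] at hr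
      have hr' : η n ≤ η (n+1) * (1 + a / 2 * η (n+1)) := by
        rw [div_le_iff₀ hη] at hr
        linarith [hr]
      obtain ⟨ih0, ih1⟩ := ih
      have h2a : (0:ℝ) < 2 / a := by positivity
      rcases le_or_gt 0 (1 - a * η (n+1)) with hc | hc
      · constructor
        · nlinarith [mul_nonneg hc ih0, sq_nonneg (η (n+1))]
        · -- (1-aη)S ≤ (1-aη)(2/a)η_n ≤ (1-aη)(2/a)η(1+(a/2)η)
          have h3 : (1 - a * η (n+1)) * S ≤ (1 - a * η (n+1)) * (2 / a * η n) :=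
            mul_le_mul_of_nonneg_left ih1 hc
          have h4 : 2 / a * η n ≤ 2 / a * (η (n+1) * (1 + a / 2 * η (n+1))) :=
            mul_le_mul_of_nonneg_left hr' (le_of_lt h2a)
          have h5 : (1 - a * η (n+1)) * (2 / a * η n) ≤
              (1 - a * η (n+1)) * (2 / a * (η (n+1) * (1 + a / 2 * η (n+1)))) :=
            mul_le_mul_of_nonneg_left h4 hc
          have ha' : a ≠ 0 := ne_of_gt ha
          have hexp : (1 - a * η (n+1)) * (2 / a * (η (n+1) * (1 + a / 2 * η (n+1))))
              = 2 / a * η (n+1) - η (n+1) ^ 2 - a * η (n+1) ^ 3 := by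
            field_simp
            ring
          nlinarith [mul_pos ha (pow_pos hη 3)]
      · constructor
        · -- S ≤ (2/a) η_n ≤ (2/a)(2/a) = 4/a², and (1-aη) < 0
          have hSb : S ≤ 2 / a * (2 / a) := by
            calc S ≤ 2 / a * η n := ih1
            _ ≤ 2 / a * (2 / a) := by
              apply mul_le_mul_of_nonneg_left (le_of_lt hηn2) (le_of_lt h2a)
          have h3 : (1 - a * η (n+1)) * (2 / a * (2 / a)) ≤ (1 - a * η (n+1)) * S :=
            mul_le_mul_of_nonpos_left hSb (le_of_lt hc)
          have hkey : (1 - a * η (n+1)) * (2 / a * (2 / a)) + η (n+1) ^ 2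
              = (η (n+1) - 2 / a) ^ 2 := by
            field_simp
            ring
          nlinarith [sq_nonneg (η (n+1) - 2 / a)]
        · have h3 : (1 - a * η (n+1)) * S ≤ 0 :=
            mul_nonpos_of_nonpos_of_nonneg (le_of_lt hc) ih0
          nlinarith [mul_lt_mul_of_pos_left hη2 hη]
  intro t ht
  exact (key t (by omega)).2
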